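/- If k is odd with 3 ≤ k ≤ n and M is a set of edges of K_n with |M| ≥ (k+1)/2, then the generalized k-edge-connectivity of K_n \ M is strictly less than n − (k+1)/2. -/

import Mathlib

open SimpleGraph

variable {V : Type*}

/-- An `S`-Steiner tree in `G`: a subgraph of `G` that is a tree and contains all of `S`. -/
def IsSteinerTree (G : SimpleGraph V) (S : Set V) (T : G.Subgraph) : Prop :=
  S ⊆ T.verts ∧ T.coe.IsTree

/-- The maximum number of pairwise edge-disjoint `S`-Steiner trees in `G`. -/
noncomputable def steinerEdgeConn (G : SimpleGraph V) (S : Set V) : ℕ :=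
  sSup {n : ℕ | ∃ f : Fin n → G.Subgraph, (∀ i, IsSteinerTree G S (f i)) ∧
    ∀ i j, i ≠ j → Disjoint (f i).edgeSet (f j).edgeSet}

/-- The maximum number of pairwise internally disjoint `S`-Steiner trees in `G`. -/
noncomputable def steinerConn (G : SimpleGraph V) (S : Set V) : ℕ :=
  sSup {n : ℕ | ∃ f : Fin n → G.Subgraph, (∀ i, IsSteinerTree G S (f i)) ∧
    ∀ i j, i ≠ j → Disjoint (f i).edgeSet (f j).edgeSet ∧
      (f i).verts ∩ (f j).verts = S}

/-- The generalized `k`-edge-connectivity `λ_k(G)`. -/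
noncomputable def genEdgeConn (G : SimpleGraph V) (k : ℕ) : ℕ :=
  sInf {m : ℕ | ∃ S : Set V, S.ncard = k ∧ steinerEdgeConn G S = m}

/-- The generalized `k`-connectivity `κ_k(G)`. -/
noncomputable def genConn (G : SimpleGraph V) (k : ℕ) : ℕ :=
  sInf {m : ℕ | ∃ S : Set V, S.ncard = k ∧ steinerConn G S = m}

/-- The edge-connectivity `λ(G)`: the least size of a set of edges whose removal
disconnects the graph. -/
noncomputable def edgeConn (G : SimpleGraph V) : ℕ :=
  sInf {m : ℕ | ∃ M : Set (Sym2 V), M ⊆ G.edgeSet ∧ M.ncard = m ∧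
    ¬ (G.deleteEdges M).Connected}

/-- The vertex-connectivity `κ(G)`: the least size of a set of vertices whose removal
leaves a non-connected graph. -/
noncomputable def vertConn (G : SimpleGraph V) : ℕ :=
  sInf {m : ℕ | ∃ A : Set V, A.ncard = m ∧ ¬ (G.induce (Aᶜ : Set V)).Connected}


/-- The minimum degree `δ(G)` (as the least cardinality of a neighbor set). -/
noncomputable def minDeg (G : SimpleGraph V) : ℕ :=
  sInf {d : ℕ | ∃ v : V, (G.neighborSet v).ncard = d}

section AuxSteiner

private lemma tree_incident_bound {X : Type*} [Fintype X] [DecidableEq X] {H : SimpleGraph X}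
    (hH : H.IsTree) (A : Finset X) (u : X) (hu : u ∉ A)
    (E' : Finset (Sym2 X)) (hE' : ∀ e, e ∈ H.edgeSet → (∃ v ∈ A, v ∈ e) → e ∈ E') :
    A.card ≤ E'.card := by
  classical
  choose f hf hf' using (hH.existsUnique_path · u)
  have hne : ∀ a ∈ A, ¬ (f a).Nil := fun a ha =>
    SimpleGraph.Walk.not_nil_of_ne (fun h => hu (h ▸ ha))
  refine Finset.card_le_card_of_injOn (fun w => s(w, (f w).getVert 1)) (fun w hw => ?_) ?_
  · show s(w, (f w).getVert 1) ∈ E'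
    have hkey : s(w, (f w).getVert 1) = ((f w).firstDart (hne w hw)).edge :=
      (SimpleGraph.Walk.edge_firstDart _ _).symm
    rw [hkey]
    exact hE' _ (SimpleGraph.Dart.edge_mem _)
      ⟨w, hw, by rw [← hkey]; exact Sym2.mem_mk_left _ _⟩
  · have key : ∀ a b : X, a ∈ A → (f a).getVert 1 = b →
        (f a).length ≤ (f b).length → False := by
      intro a b ha hb1 h'
      have h2 := hf' b (((f a).tail).copy hb1 rfl)
        (by simpa using (hf a).tail)
      have h3 := congrArg SimpleGraph.Walk.length h2
      rw [SimpleGraph.Walk.length_copy] at h3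
      have h4 := SimpleGraph.Walk.length_tail_add_one (hne a ha)
      omega
    intro a ha b hb h
    simp only [Sym2.eq_iff] at h
    obtain ⟨rfl, -⟩ | ⟨ha1, hb1⟩ := h
    · rfl
    · exfalso
      rcases le_total (f a).length (f b).length with h' | h'
      · exact key a b ha hb1 h'
      · exact key b a hb ha1.symm h'

private lemma subgraph_tree_incident_bound {n : ℕ} {G : SimpleGraph (Fin n)} {T : G.Subgraph}
    (hT : T.coe.IsTree) (SF : Finset (Fin n)) (hS : ↑SF ⊆ T.verts)
    (u : Fin n) (huV : u ∈ T.verts) (huS : u ∉ SF)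
    (E' : Finset (Sym2 (Fin n)))
    (hE' : ∀ e, e ∈ T.edgeSet → (∃ v ∈ SF, v ∈ e) → e ∈ E') :
    SF.card ≤ E'.card := by
  classical
  haveI : Fintype ↥T.verts := Fintype.ofFinite _
  set A : Finset ↥T.verts := SF.attach.map ⟨fun x => ⟨x.1, hS x.2⟩, by
    intro x y hxy
    simp only at hxy
    exact Subtype.ext (by simpa using hxy)⟩ with hA
  have hmemA : ∀ v : ↥T.verts, v ∈ A ↔ ↑v ∈ SF := by
    intro v
    simp only [hA, Finset.mem_map, Finset.mem_attach, Function.Embedding.coeFn_mk, true_and]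
    constructor
    · rintro ⟨a, rfl⟩; exact a.2
    · intro hv; exact ⟨⟨v.1, hv⟩, Subtype.ext rfl⟩
  have hAcard : A.card = SF.card := by simp [hA]
  set E'' : Finset (Sym2 ↥T.verts) :=
    Finset.univ.filter (fun e => Sym2.map Subtype.val e ∈ E') with hE''
  have h1 : A.card ≤ E''.card := by
    refine tree_incident_bound hT A ⟨u, huV⟩ (by simp [hmemA, huS]) E'' ?_
    intro e he hex
    obtain ⟨v, hvA, hve⟩ := hex
    rw [hE'', Finset.mem_filter]
    refine ⟨Finset.mem_univ _, hE' _ ?_ ⟨v.1, (hmemA v).1 hvA, Sym2.mem_map.2 ⟨v, hve, rfl⟩⟩⟩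
    rw [SimpleGraph.Subgraph.edgeSet_coe] at he
    exact he
  have h2 : E''.card ≤ E'.card := by
    refine Finset.card_le_card_of_injOn (Sym2.map Subtype.val)
      (fun e he => (Finset.mem_filter.1 he).2) ?_
    intro e1 _ e2 _ h
    exact Sym2.map.injective Subtype.val_injective h
  omega

private lemma subgraph_tree_card {X : Type*} [Fintype X] {G : SimpleGraph X} {T : G.Subgraph}
    (hT : T.coe.IsTree) : T.edgeSet.ncard + 1 = T.verts.ncard := by
  classical
  haveI : Fintype ↥T.verts := Fintype.ofFinite _
  haveI : Fintype ↥T.coe.edgeSet := Fintype.ofFinite _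
  have h1 := hT.card_edgeFinset
  have h2 : T.verts.ncard = Fintype.card ↥T.verts := by
    rw [Set.ncard_eq_toFinset_card', Set.toFinset_card]
  have h3 : T.edgeSet.ncard = T.coe.edgeFinset.card := by
    rw [← SimpleGraph.Subgraph.image_coe_edgeSet_coe,
      Set.ncard_image_of_injective _ (Sym2.map.injective Subtype.val_injective),
      ← SimpleGraph.coe_edgeFinset, Set.ncard_coe_finset]
  omega

private lemma inside_bound {n : ℕ} (SF : Finset (Fin n)) (E' : Finset (Sym2 (Fin n)))
    (hE' : ∀ e ∈ E', ¬ e.IsDiag ∧ ∀ v ∈ e, v ∈ SF) :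
    E'.card ≤ Nat.choose SF.card 2 := by
  classical
  have hsub : E' ∪ SF.image Sym2.diag ⊆ SF.sym2 := by
    intro e he
    rw [Finset.mem_union] at he
    rcases he with he | he
    · exact Finset.mem_sym2_iff.2 fun a ha => (hE' e he).2 a ha
    · obtain ⟨x, hx, rfl⟩ := Finset.mem_image.1 he
      refine Finset.mem_sym2_iff.2 fun a ha => ?_
      rcases Sym2.mem_iff.1 ha with rfl | rfl <;> exact hx
  have hdisj : Disjoint E' (SF.image Sym2.diag) := by
    rw [Finset.disjoint_left]
    intro e he he'
    obtain ⟨x, hx, rfl⟩ := Finset.mem_image.1 he'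
    exact (hE' _ he).1 (Sym2.diag_isDiag x)
  have hcard := Finset.card_le_card hsub
  rw [Finset.card_union_of_disjoint hdisj,
    Finset.card_image_of_injective _ Sym2.diag_injective, Finset.card_sym2] at hcard
  have hch : (SF.card + 1).choose 2 = SF.card + SF.card.choose 2 := by
    rw [Nat.choose_succ_succ, Nat.choose_one_right]
  omega

private lemma top_incident_bound {n : ℕ} (SF : Finset (Fin n)) (E' : Finset (Sym2 (Fin n)))
    (hE' : ∀ e ∈ E', ¬ e.IsDiag ∧ ∃ v ∈ SF, v ∈ e) :
    E'.card ≤ SF.card * (n - SF.card) + Nat.choose SF.card 2 := by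
  classical
  have hsplit := Finset.card_filter_add_card_filter_not (s := E')
    (p := fun e => ∀ v ∈ e, v ∈ SF)
  have hin : (E'.filter (fun e => ∀ v ∈ e, v ∈ SF)).card ≤ Nat.choose SF.card 2 :=
    inside_bound SF _ (fun e he =>
      ⟨(hE' e (Finset.mem_filter.1 he).1).1, (Finset.mem_filter.1 he).2⟩)
  have hcross : (E'.filter (fun e => ¬ ∀ v ∈ e, v ∈ SF)).card ≤ SF.card * (n - SF.card) := by
    have hcc : ∀ e ∈ E'.filter (fun e => ¬ ∀ v ∈ e, v ∈ SF),
        ∃ p : Fin n × Fin n, e = s(p.1, p.2) ∧ p.1 ∈ SF ∧ p.2 ∉ SF := by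
      intro e he
      rw [Finset.mem_filter] at he
      obtain ⟨he1, he2⟩ := he
      obtain ⟨-, v, hvS, hve⟩ := hE' e he1
      push_neg at he2
      obtain ⟨w, hwe, hwS⟩ := he2
      revert hve hwe
      induction e with
      | _ a b =>
        intro hve hwe
        rcases Sym2.mem_iff.1 hve with rfl | rfl
        · rcases Sym2.mem_iff.1 hwe with rfl | rfl
          · exact absurd hvS hwS
          · exact ⟨(v, w), rfl, hvS, hwS⟩
        · rcases Sym2.mem_iff.1 hwe with rfl | rfl
          · exact ⟨(v, w), Sym2.eq_swap, hvS, hwS⟩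
          · exact absurd hvS hwS
    have hle : (E'.filter (fun e => ¬ ∀ v ∈ e, v ∈ SF)).card ≤ (SF ×ˢ SFᶜ).card := by
      refine Finset.card_le_card_of_injOn
        (fun e => if h : ∃ p : Fin n × Fin n, e = s(p.1, p.2) ∧ p.1 ∈ SF ∧ p.2 ∉ SF
          then h.choose else Quot.out e) (fun e he => ?_) ?_
      · have hp : (if h : ∃ p : Fin n × Fin n, e = s(p.1, p.2) ∧ p.1 ∈ SF ∧ p.2 ∉ SF
            then h.choose else Quot.out e) = (hcc e he).choose := dif_pos (hcc e he)
        show (if h : _ then _ else _) ∈ _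
        rw [hp]
        obtain ⟨-, h1, h2⟩ := (hcc e he).choose_spec
        exact Finset.mem_product.2 ⟨h1, Finset.mem_compl.2 h2⟩
      · intro e1 he1 e2 he2 heq
        have hp1 : (if h : ∃ p : Fin n × Fin n, e1 = s(p.1, p.2) ∧ p.1 ∈ SF ∧ p.2 ∉ SF
            then h.choose else Quot.out e1) = (hcc e1 he1).choose := dif_pos (hcc e1 he1)
        have hp2 : (if h : ∃ p : Fin n × Fin n, e2 = s(p.1, p.2) ∧ p.1 ∈ SF ∧ p.2 ∉ SF
            then h.choose else Quot.out e2) = (hcc e2 he2).choose := dif_pos (hcc e2 he2)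
        simp only at heq
        rw [hp1, hp2] at heq
        rw [(hcc _ he1).choose_spec.1, (hcc _ he2).choose_spec.1, heq]
    have hcardp : (SF ×ˢ SFᶜ).card = SF.card * (n - SF.card) := by
      rw [Finset.card_product, Finset.card_compl, Fintype.card_fin]
    omega
  omega

end AuxSteiner

theorem genEdgeConn_complete_minus_edges (n k : ℕ) (hk : Odd k) (h3 : 3 ≤ k) (hkn : k ≤ n)
    (M : Set (Sym2 (Fin n))) (hM : M ⊆ (⊤ : SimpleGraph (Fin n)).edgeSet)
    (hMcard : (k + 1) / 2 ≤ M.ncard) :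
    genEdgeConn ((⊤ : SimpleGraph (Fin n)).deleteEdges M) k < n - (k + 1) / 2 := by
  classical
  obtain ⟨j, hj⟩ := hk
  have hj' : k = 2 * j + 1 := by omega
  subst hj'
  have hj1 : 1 ≤ j := by omega
  rw [show (2 * j + 1 + 1) / 2 = j + 1 from by omega] at hMcard ⊢
  set G := (⊤ : SimpleGraph (Fin n)).deleteEdges M with hG
  -- choose a set M₀ of j+1 deleted edges and a vertex set SF of size k meeting all of them
  have hMfin : M.Finite := Set.toFinite M
  have hMc : j + 1 ≤ hMfin.toFinset.card := by
    rwa [← Set.ncard_eq_toFinset_card]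
  obtain ⟨M₀, hM₀sub, hM₀card⟩ := Finset.exists_subset_card_eq hMc
  have hM₀M : ∀ e ∈ M₀, e ∈ M := fun e he => hMfin.mem_toFinset.1 (hM₀sub he)
  obtain ⟨SF, hSFsub, hSFcard⟩ := Finset.exists_superset_card_eq
    (s := M₀.image (fun e => (Quot.out e).1)) (n := 2 * j + 1)
    (le_trans Finset.card_image_le (by omega)) (by simp [Fintype.card_fin]; omega)
  have hch : Nat.choose SF.card 2 = (2 * j + 1) * j := by
    rw [hSFcard, Nat.choose_two_right, show (2 * j + 1) - 1 = 2 * j from by omega,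
      show (2 * j + 1) * (2 * j) = (2 * j + 1) * j * 2 from by ring]
    exact Nat.mul_div_cancel _ two_pos
  -- the main bound
  have hbound : steinerEdgeConn G (↑SF) ≤ n - j - 2 := by
    refine csSup_le ⟨0, Fin.elim0, fun i => i.elim0, fun i j' h => i.elim0⟩ ?_
    rintro t ⟨f, htr, hdis⟩
    have hSsub : ∀ i, (↑SF : Set (Fin n)) ⊆ (f i).verts := fun i => (htr i).1
    set P : Sym2 (Fin n) → Prop := fun e => ∃ v ∈ SF, v ∈ e with hP
    set Efull : Fin t → Finset (Sym2 (Fin n)) :=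
      fun i => (Set.toFinite (f i).edgeSet).toFinset with hEfull
    set F : Fin t → Finset (Sym2 (Fin n)) := fun i => (Efull i).filter P with hF
    set EG : Finset (Sym2 (Fin n)) := ((Set.toFinite G.edgeSet).toFinset).filter P with hEG0
    set ETop : Finset (Sym2 (Fin n)) :=
      ((Set.toFinite (⊤ : SimpleGraph (Fin n)).edgeSet).toFinset).filter P with hET0
    set EInside : Finset (Sym2 (Fin n)) :=
      Finset.univ.filter (fun e : Sym2 (Fin n) => ¬ e.IsDiag ∧ ∀ v ∈ e, v ∈ SF) with hEI0
    have hvertmem : ∀ (i : Fin t) (e : Sym2 (Fin n)),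
        e ∈ (f i).edgeSet → ∀ v ∈ e, v ∈ (f i).verts := by
      intro i e
      induction e with
      | _ a b =>
        intro he v hv
        rw [SimpleGraph.Subgraph.mem_edgeSet] at he
        rcases Sym2.mem_iff.1 hv with rfl | rfl
        · exact (f i).edge_vert he
        · exact (f i).edge_vert he.symm
    have hnd : ∀ (i : Fin t) (e : Sym2 (Fin n)), e ∈ (f i).edgeSet → ¬ e.IsDiag := by
      intro i e he
      have h1 : e ∈ G.edgeSet := (f i).edgeSet_subset he
      rw [hG, SimpleGraph.edgeSet_deleteEdges] at h1
      have h2 := h1.1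
      rwa [SimpleGraph.edgeSet_top] at h2
    have hver : ∀ i, (f i).verts = ↑SF →
        Efull i ⊆ EInside ∧ (Efull i).card + 1 = 2 * j + 1 := by
      intro i hveq
      constructor
      · intro e he
        have he' := (Set.Finite.mem_toFinset _).1 he
        refine Finset.mem_filter.2 ⟨Finset.mem_univ _, hnd i e he', fun v hv => ?_⟩
        have := hvertmem i e he' v hv
        rw [hveq] at this
        exact this
      · rw [hEfull]
        rw [← Set.ncard_eq_toFinset_card]
        have := subgraph_tree_card (htr i).2
        rw [hveq, Set.ncard_coe_finset, hSFcard] at this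
        omega
    have hper : ∀ i, 2 * j + 1 ≤ (F i).card + (if (f i).verts = ↑SF then 1 else 0) := by
      intro i
      by_cases hv : (f i).verts = ↑SF
      · rw [if_pos hv]
        have hful : F i = Efull i := by
          rw [hF]
          apply Finset.filter_true_of_mem
          intro e he
          have he' := (Set.Finite.mem_toFinset _).1 he
          refine ⟨(Quot.out e).1, ?_, Sym2.out_fst_mem e⟩
          have := hvertmem i e he' _ (Sym2.out_fst_mem e)
          rw [hv] at this
          exact this
        have := (hver i hv).2
        rw [hful]
        omega
      · rw [if_neg hv]
        obtain ⟨u, huV, huS⟩ :=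
          Set.exists_of_ssubset (ssubset_of_subset_of_ne (hSsub i) (Ne.symm hv))
        have := subgraph_tree_incident_bound (htr i).2 SF (hSsub i) u huV
          (fun h => huS h)
          (F i) (fun e he hPe => Finset.mem_filter.2 ⟨(Set.Finite.mem_toFinset _).2 he, hPe⟩)
        rw [hSFcard] at this
        omega
    have hFd : ∀ a b : Fin t, a ≠ b → Disjoint (Efull a) (Efull b) := by
      intro a b hab
      rw [Finset.disjoint_left]
      intro e hea heb
      exact Set.disjoint_left.1 (hdis a b hab)
        ((Set.Finite.mem_toFinset _).1 hea) ((Set.Finite.mem_toFinset _).1 heb)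
    have hsum1 : t * (2 * j + 1) ≤ (∑ i, (F i).card) +
        (Finset.univ.filter (fun i => (f i).verts = ↑SF)).card := by
      calc t * (2 * j + 1) = ∑ _i : Fin t, (2 * j + 1) := by
            rw [Finset.sum_const, Finset.card_univ, Fintype.card_fin, smul_eq_mul]
        _ ≤ ∑ i, ((F i).card + (if (f i).verts = ↑SF then 1 else 0)) :=
            Finset.sum_le_sum fun i _ => hper i
        _ = (∑ i, (F i).card) + ∑ i, (if (f i).verts = ↑SF then 1 else 0) :=
            Finset.sum_add_distrib
        _ = _ := by
            congr 1
            simp [Finset.sum_boole]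
    have hsum2 : ∑ i, (F i).card ≤ EG.card := by
      rw [← Finset.card_biUnion (fun a _ b hb hab =>
        (hFd a b hab).mono (Finset.filter_subset _ _) (Finset.filter_subset _ _))]
      apply Finset.card_le_card
      refine Finset.biUnion_subset.2 fun i _ => ?_
      refine Finset.filter_subset_filter _ ?_
      exact Set.Finite.toFinset_subset_toFinset.2 ((f i).edgeSet_subset)
    have hsc : (Finset.univ.filter (fun i => (f i).verts = ↑SF)).card * (2 * j)
        ≤ (2 * j + 1) * j := by
      have hEi : EInside.card ≤ Nat.choose SF.card 2 :=
        inside_bound SF EInside (fun e he => (Finset.mem_filter.1 he).2)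
      have hsum3 : ∑ i ∈ Finset.univ.filter (fun i => (f i).verts = ↑SF), (Efull i).card
          ≤ EInside.card := by
        rw [← Finset.card_biUnion (fun a _ b _ hab => hFd a b hab)]
        exact Finset.card_le_card (Finset.biUnion_subset.2
          fun i hi => (hver i (Finset.mem_filter.1 hi).2).1)
      have hsum4 : ∑ i ∈ Finset.univ.filter (fun i => (f i).verts = ↑SF), (Efull i).card
          = (Finset.univ.filter (fun i => (f i).verts = ↑SF)).card * (2 * j) := by
        rw [Finset.sum_congr rfl (fun i hi => show (Efull i).card = 2 * j from by
          have := (hver i (Finset.mem_filter.1 hi).2).2; omega),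
          Finset.sum_const, smul_eq_mul]
      omega
    have hsle : (Finset.univ.filter (fun i => (f i).verts = ↑SF)).card ≤ j := by
      rcases le_or_gt (Finset.univ.filter (fun i => (f i).verts = ↑SF)).card j with h | h
      · exact h
      · exfalso
        have h2 : (j + 1) * (2 * j) ≤
            (Finset.univ.filter (fun i => (f i).verts = ↑SF)).card * (2 * j) :=
          Nat.mul_le_mul_right _ h
        nlinarith
    have hMET : M₀ ⊆ ETop := by
      intro e he
      refine Finset.mem_filter.2 ⟨(Set.Finite.mem_toFinset _).2 (hM (hM₀M e he)), ?_⟩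
      exact ⟨(Quot.out e).1, hSFsub (Finset.mem_image.2 ⟨e, he, rfl⟩), Sym2.out_fst_mem e⟩
    have hEGsub : EG ⊆ ETop \ M₀ := by
      intro e he
      obtain ⟨he1, he2⟩ := Finset.mem_filter.1 he
      have he1' := (Set.Finite.mem_toFinset _).1 he1
      rw [hG, SimpleGraph.edgeSet_deleteEdges] at he1'
      exact Finset.mem_sdiff.2 ⟨Finset.mem_filter.2 ⟨(Set.Finite.mem_toFinset _).2 he1'.1, he2⟩,
        fun hc => he1'.2 (hM₀M e hc)⟩
    have hEGc : EG.card + (j + 1) ≤ ETop.card := by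
      have h3 := Finset.card_le_card hEGsub
      rw [Finset.card_sdiff_of_subset hMET, hM₀card] at h3
      have h4 := Finset.card_le_card hMET
      rw [hM₀card] at h4
      omega
    have hET : ETop.card ≤ (2 * j + 1) * (n - (2 * j + 1)) + (2 * j + 1) * j := by
      have h5 : ∀ e ∈ ETop, ¬ e.IsDiag ∧ ∃ v ∈ SF, v ∈ e := by
        intro e he
        obtain ⟨he1, he2⟩ := Finset.mem_filter.1 he
        have h6 := (Set.Finite.mem_toFinset _).1 he1
        rw [SimpleGraph.edgeSet_top] at h6
        exact ⟨h6, he2⟩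
      have := top_incident_bound SF ETop h5
      rwa [hch, hSFcard] at this
    obtain ⟨m, hm⟩ : ∃ m, n = m + (2 * j + 1) := ⟨n - (2 * j + 1), by omega⟩
    have hmain : t * (2 * j + 1) < (m + j) * (2 * j + 1) := by
      have hrw : (2 * j + 1) * (n - (2 * j + 1)) = (2 * j + 1) * m := by
        congr 1
        omega
      rw [hrw] at hET
      have h7 : t * (2 * j + 1) ≤ EG.card +
          (Finset.univ.filter (fun i => (f i).verts = ↑SF)).card :=
        le_trans hsum1 (add_le_add hsum2 le_rfl)
      nlinarith
    have h8 : t < m + j := lt_of_mul_lt_mul_right hmain (Nat.zero_le _)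
    omega
  have hmem : genEdgeConn G (2 * j + 1) ≤ steinerEdgeConn G (↑SF) :=
    Nat.sInf_le ⟨↑SF, by rw [Set.ncard_coe_finset, hSFcard], rfl⟩
  have hn : 2 * j + 1 ≤ n := hkn
  omega
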